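/- The optimal value of the transferring problem is a lower bound on the cost of any combined transferring-plus-packing solution: suppose X : M × S → ℕ satisfies the demand constraints (i) and sending constraints (ii) of T(M)-feasibility, and for each movement (i,j) ∈ M there is a feasible packing (x^{ij}, y^{ij}) for the quantities T_s := X_{i,j,s} with per-package costs Cost_{i,j,p}. Define Y_{i,j,p} := ∑_{k=1}^{AP_p} y^{ij}_{p,k} (the number of used packages of type p on arc (i,j)). Then (X, Y) is T(M)-feasible, the transportation cost ∑_{(i,j) ∈ M, p ∈ P} Cost_{i,j,p} Y_{i,j,p} equals the total cost of the packings ∑_{(i,j) ∈ M} ∑_{p ∈ P} ∑_{k=1}^{AP_p} Cost_{i,j,p} y^{ij}_{p,k}, and consequently opt(M) ≤ obj_M(X, Y). -/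
import Mathlib


open Finset

noncomputable section

variable {F S P : Type*} [Fintype F] [Fintype S] [Fintype P] [DecidableEq F]

/-- Final stock of SKU `s` at facility `i` after the redistribution `X` along movements in `M`. -/
def FSstock (M : Finset (F × F)) (IS : F → S → ℕ) (X : F → F → S → ℕ) (i : F) (s : S) : ℤ :=
  (IS i s : ℤ) + ∑ j ∈ univ.filter (fun j => (j, i) ∈ M), (X j i s : ℤ)
    - ∑ j ∈ univ.filter (fun j => (i, j) ∈ M), (X i j s : ℤ)

/-- Feasibility of `(X, Y)` for the transferring problem `T(M)`. -/
def TFeasible (W : Finset F) (M : Finset (F × F)) (IS FD : F → S → ℕ)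
    (w : S → ℝ) (Cap : P → ℝ) (X : F → F → S → ℕ) (Y : F → F → P → ℕ) : Prop :=
  (∀ i ∉ W, ∀ s, (FD i s : ℤ) ≤ FSstock M IS X i s) ∧
  (∀ i ∉ W, ∀ s,
    (∑ j ∈ univ.filter (fun j => (i, j) ∈ M), (X i j s : ℤ))
      ≤ max 0 ((IS i s : ℤ) - (FD i s : ℤ))) ∧
  (∀ m ∈ M, ∑ s, w s * (X m.1 m.2 s : ℝ) ≤ ∑ p, Cap p * (Y m.1 m.2 p : ℝ))

/-- Objective function of the transferring problem `T(M)`. -/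
def Tobj (W : Finset F) (M : Finset (F × F)) (IS FD VD : F → S → ℕ)
    (pr : F → S → ℝ) (Cost : F → F → P → ℝ) (α ε : ℝ)
    (X : F → F → S → ℕ) (Y : F → F → P → ℕ) : ℝ :=
  (∑ m ∈ M, ∑ p, Cost m.1 m.2 p * (Y m.1 m.2 p : ℝ))
  + α * ∑ i ∈ Wᶜ, ∑ s,
      pr i s * max 0 ((FD i s : ℝ) + (VD i s : ℝ) - ((FSstock M IS X i s : ℤ) : ℝ))
  + ε * ∑ m ∈ M, ∑ s, (X m.1 m.2 s : ℝ)

/-- Optimal value of the transferring problem `T(M)` (infimum in `EReal`,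
so that an infeasible problem has optimal value `⊤`). -/
def Topt (W : Finset F) (M : Finset (F × F)) (IS FD VD : F → S → ℕ)
    (pr : F → S → ℝ) (w : S → ℝ) (Cap : P → ℝ) (Cost : F → F → P → ℝ) (α ε : ℝ) : EReal :=
  sInf {v : EReal | ∃ X Y, TFeasible W M IS FD w Cap X Y ∧
    (Tobj W M IS FD VD pr Cost α ε X Y : EReal) = v}


/-- Feasibility of `(x, y)` for the packing problem `P(T)`. -/
def PackFeasible (AP : P → ℕ) (Cap : P → ℝ) (w : S → ℝ) (T : S → ℕ)
    (x : P → ℕ → S → ℕ) (y : P → ℕ → ℕ) : Prop :=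
  (∀ p : P, ∀ k ∈ Finset.range (AP p), y p k = 0 ∨ y p k = 1) ∧
  (∀ p : P, ∀ k ∈ Finset.range (AP p),
    ∑ s, w s * (x p k s : ℝ) ≤ Cap p * (y p k : ℝ)) ∧
  (∀ s : S, ∑ p : P, ∑ k ∈ Finset.range (AP p), x p k s = T s)

/-- The optimal value of the transferring problem is a lower bound on the cost of any
combined transferring-plus-packing solution. -/
theorem transferring_lower_bound_of_packing
    (W : Finset F) (M : Finset (F × F)) (hloop : ∀ i : F, (i, i) ∉ M)
    (IS FD VD : F → S → ℕ) (pr : F → S → ℝ) (w : S → ℝ) (Cap : P → ℝ)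
    (Cost : F → F → P → ℝ) (α ε : ℝ) (AP : P → ℕ)
    (hpr : ∀ i s, 0 ≤ pr i s ∧ pr i s ≤ 1) (hw : ∀ s, 0 ≤ w s)
    (hCap : ∀ p, 0 ≤ Cap p) (hCost : ∀ i j p, 0 ≤ Cost i j p)
    (hα : 0 ≤ α) (hε : 0 ≤ ε)
    (X : F → F → S → ℕ)
    (hdem : ∀ i ∉ W, ∀ s, (FD i s : ℤ) ≤ FSstock M IS X i s)
    (hsend : ∀ i ∉ W, ∀ s,
      (∑ j ∈ univ.filter (fun j => (i, j) ∈ M), (X i j s : ℤ))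
        ≤ max 0 ((IS i s : ℤ) - (FD i s : ℤ)))
    (x : F × F → P → ℕ → S → ℕ) (y : F × F → P → ℕ → ℕ)
    (hpack : ∀ m ∈ M, PackFeasible AP Cap w (fun s => X m.1 m.2 s) (x m) (y m))
    (Y : F → F → P → ℕ)
    (hY : ∀ i j p, Y i j p = ∑ k ∈ Finset.range (AP p), y (i, j) p k) :
    TFeasible W M IS FD w Cap X Y ∧
    (∑ m ∈ M, ∑ p, Cost m.1 m.2 p * (Y m.1 m.2 p : ℝ))
      = ∑ m ∈ M, ∑ p, ∑ k ∈ Finset.range (AP p), Cost m.1 m.2 p * (y m p k : ℝ) ∧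
    Topt W M IS FD VD pr w Cap Cost α ε ≤ (Tobj W M IS FD VD pr Cost α ε X Y : EReal) := by
  have hfeas : TFeasible W M IS FD w Cap X Y := by
    refine ⟨hdem, hsend, fun m hm => ?_⟩
    obtain ⟨h01, hcap, htot⟩ := hpack m hm
    calc ∑ s, w s * (X m.1 m.2 s : ℝ)
        = ∑ s, w s * ((∑ p : P, ∑ k ∈ Finset.range (AP p), x m p k s : ℕ) : ℝ) := by
          simp [htot]
      _ = ∑ p : P, ∑ k ∈ Finset.range (AP p), ∑ s, w s * (x m p k s : ℝ) := by
          push_cast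
          simp only [Finset.mul_sum]
          rw [Finset.sum_comm]
          exact Finset.sum_congr rfl fun p _ => Finset.sum_comm
      _ ≤ ∑ p : P, ∑ k ∈ Finset.range (AP p), Cap p * (y m p k : ℝ) := by
          refine Finset.sum_le_sum fun p _ => Finset.sum_le_sum fun k hk => hcap p k hk
      _ = ∑ p, Cap p * (Y m.1 m.2 p : ℝ) := by
          refine Finset.sum_congr rfl fun p _ => ?_
          rw [hY]
          push_cast
          rw [Finset.mul_sum]
  have hcost : (∑ m ∈ M, ∑ p, Cost m.1 m.2 p * (Y m.1 m.2 p : ℝ))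
      = ∑ m ∈ M, ∑ p, ∑ k ∈ Finset.range (AP p), Cost m.1 m.2 p * (y m p k : ℝ) := by
    refine Finset.sum_congr rfl fun m _ => Finset.sum_congr rfl fun p _ => ?_
    rw [hY]
    push_cast
    rw [Finset.mul_sum]
  exact ⟨hfeas, hcost, sInf_le ⟨X, Y, hfeas, rfl⟩⟩

end
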